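/- Let a(n) be the coefficient sequence of E₁ = q(1-6q+11q²-6q³+2q⁴)/(1-9q+27q²-32q³+13q⁴-3q⁵-q⁶). Then there exist constants c > 0 and λ ∈ (4.28, 4.30) such that a(n)/λⁿ converges to c as n → ∞. -/

import Mathlib

open PowerSeries Filter
open Finset

set_option maxHeartbeats 2000000

/-- The coefficient sequence `a(n)` of the area generating function for level
one polyominoes with cheesy blocks satisfies `a(n)/λⁿ → c` for some constant
`c > 0` and some `λ ∈ (4.28, 4.30)`. -/
theorem level_one_asymptotics
    (E : PowerSeries ℚ)
    (hE : E = (X * (1 - 6*X + 11*X^2 - 6*X^3 + 2*X^4)) *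
        (1 - 9*X + 27*X^2 - 32*X^3 + 13*X^4 - 3*X^5 - X^6)⁻¹)
    (a : ℕ → ℚ) (ha : ∀ n, a n = coeff n E) :
    ∃ c lam : ℝ, 0 < c ∧ lam ∈ Set.Ioo (4.28 : ℝ) 4.30 ∧
      Tendsto (fun n : ℕ => (a n : ℝ) / lam ^ n) atTop (nhds c) := by
  have hDinv : ((1 : PowerSeries ℚ) - 9*X + 27*X^2 - 32*X^3 + 13*X^4 - 3*X^5 - X^6)⁻¹ *
      ((1 : PowerSeries ℚ) - 9*X + 27*X^2 - 32*X^3 + 13*X^4 - 3*X^5 - X^6) = 1 :=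
    PowerSeries.inv_mul_cancel _ (by simp)
  have hED : E * ((1 : PowerSeries ℚ) - 9*X + 27*X^2 - 32*X^3 + 13*X^4 - 3*X^5 - X^6)
      = X * (1 - 6*X + 11*X^2 - 6*X^3 + 2*X^4) := by
    rw [hE, mul_assoc, hDinv, mul_one]
  have hED2 : E - C 9 * (E * X^1) + C 27 * (E * X^2) - C 32 * (E * X^3)
        + C 13 * (E * X^4) - C 3 * (E * X^5) - E * X^6
      = X^1 - C 6 * X^2 + C 11 * X^3 - C 6 * X^4 + C 2 * X^5 := by
    rw [map_ofNat (C (R := ℚ)) 9, map_ofNat (C (R := ℚ)) 27, map_ofNat (C (R := ℚ)) 32, map_ofNat (C (R := ℚ)) 13,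
      map_ofNat (C (R := ℚ)) 3, map_ofNat (C (R := ℚ)) 6, map_ofNat (C (R := ℚ)) 11, map_ofNat (C (R := ℚ)) 2]
    linear_combination hED
  have hcoeff : ∀ n : ℕ, coeff n E
        - 9 * (if 1 ≤ n then coeff (n-1) E else 0)
        + 27 * (if 2 ≤ n then coeff (n-2) E else 0)
        - 32 * (if 3 ≤ n then coeff (n-3) E else 0)
        + 13 * (if 4 ≤ n then coeff (n-4) E else 0)
        - 3 * (if 5 ≤ n then coeff (n-5) E else 0)
        - (if 6 ≤ n then coeff (n-6) E else 0)
      = (if n = 1 then (1:ℚ) else 0) - 6 * (if n = 2 then (1:ℚ) else 0)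
        + 11 * (if n = 3 then (1:ℚ) else 0) - 6 * (if n = 4 then (1:ℚ) else 0)
        + 2 * (if n = 5 then (1:ℚ) else 0) := by
    intro n
    have h := congrArg (coeff n) hED2
    simp only [map_sub, map_add, coeff_C_mul] at h
    simpa only [coeff_mul_X_pow', coeff_X_pow] using h
  -- initial values
  have c0 : constantCoeff E = 0 := by have h := hcoeff 0; norm_num at h; linarith
  have c1 : coeff 1 E = 1 := by have h := hcoeff 1; norm_num [c0] at h; linarith
  have c2 : coeff 2 E = 3 := by have h := hcoeff 2; norm_num [c0, c1] at h; linarith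
  have c3 : coeff 3 E = 11 := by have h := hcoeff 3; norm_num [c0, c1, c2] at h; linarith
  have c4 : coeff 4 E = 44 := by have h := hcoeff 4; norm_num [c0, c1, c2, c3] at h; linarith
  have c5 : coeff 5 E = 184 := by have h := hcoeff 5; norm_num [c0, c1, c2, c3, c4] at h; linarith
  -- the recurrence
  have hrecQ : ∀ m : ℕ, a (m+6) = 9 * a (m+5) - 27 * a (m+4) + 32 * a (m+3)
      - 13 * a (m+2) + 3 * a (m+1) + a m := by
    intro m
    have h := hcoeff (m+6)
    rw [if_pos (show (1:ℕ) ≤ m+6 by omega), if_pos (show (2:ℕ) ≤ m+6 by omega),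
      if_pos (show (3:ℕ) ≤ m+6 by omega), if_pos (show (4:ℕ) ≤ m+6 by omega),
      if_pos (show (5:ℕ) ≤ m+6 by omega), if_pos (show (6:ℕ) ≤ m+6 by omega),
      if_neg (show ¬(m+6 = 1) by omega), if_neg (show ¬(m+6 = 2) by omega),
      if_neg (show ¬(m+6 = 3) by omega), if_neg (show ¬(m+6 = 4) by omega),
      if_neg (show ¬(m+6 = 5) by omega),
      show m+6-1 = m+5 from by omega, show m+6-2 = m+4 from by omega,
      show m+6-3 = m+3 from by omega, show m+6-4 = m+2 from by omega,
      show m+6-5 = m+1 from by omega, show m+6-6 = m from by omega] at h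
    rw [ha (m+6), ha (m+5), ha (m+4), ha (m+3), ha (m+2), ha (m+1), ha m]
    linarith
  have ha0 : a 0 = 0 := by rw [ha]; simpa using c0
  have ha1 : a 1 = 1 := by rw [ha]; exact c1
  have ha2 : a 2 = 3 := by rw [ha]; exact c2
  have ha3 : a 3 = 11 := by rw [ha]; exact c3
  have ha4 : a 4 = 44 := by rw [ha]; exact c4
  have ha5 : a 5 = 184 := by rw [ha]; exact c5
  have ha6 : a 6 = 784 := by have := hrecQ 0; rw [ha0,ha1,ha2,ha3,ha4,ha5] at this; linarith
  have ha7 : a 7 = 3363 := by have := hrecQ 1; rw [ha1,ha2,ha3,ha4,ha5,ha6] at this; linarith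
  have ha8 : a 8 = 14451 := by have := hrecQ 2; rw [ha2,ha3,ha4,ha5,ha6,ha7] at this; linarith
  -- real versions
  have hrecR : ∀ m : ℕ, ((a (m+6) : ℝ)) = 9 * (a (m+5) : ℝ) - 27 * (a (m+4) : ℝ)
      + 32 * (a (m+3) : ℝ) - 13 * (a (m+2) : ℝ) + 3 * (a (m+1) : ℝ) + (a m : ℝ) := by
    intro m; exact_mod_cast congrArg (fun q : ℚ => (q : ℝ)) (hrecQ m)
  have hA0 : ((a 0 : ℝ)) = 0 := by rw [ha0]; norm_num
  have hA1 : ((a 1 : ℝ)) = 1 := by rw [ha1]; norm_num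
  have hA2 : ((a 2 : ℝ)) = 3 := by rw [ha2]; norm_num
  have hA3 : ((a 3 : ℝ)) = 11 := by rw [ha3]; norm_num
  have hA4 : ((a 4 : ℝ)) = 44 := by rw [ha4]; norm_num
  have hA5 : ((a 5 : ℝ)) = 184 := by rw [ha5]; norm_num
  have hA6 : ((a 6 : ℝ)) = 784 := by rw [ha6]; norm_num
  have hA7 : ((a 7 : ℝ)) = 3363 := by rw [ha7]; norm_num
  have hA8 : ((a 8 : ℝ)) = 14451 := by rw [ha8]; norm_num
  -- the dominant root lam
  obtain ⟨lam, hlam_mem, hlam_root⟩ :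
      ∃ lam ∈ Set.Icc (42896/10000 : ℝ) (42897/10000 : ℝ),
        lam^6 - 9*lam^5 + 27*lam^4 - 32*lam^3 + 13*lam^2 - 3*lam - 1 = 0 := by
    have hcont : ContinuousOn
        (fun x : ℝ => x^6 - 9*x^5 + 27*x^4 - 32*x^3 + 13*x^2 - 3*x - 1)
        (Set.Icc (42896/10000 : ℝ) (42897/10000 : ℝ)) := by fun_prop
    have hsub := intermediate_value_Icc (by norm_num : (42896/10000 : ℝ) ≤ 42897/10000) hcont
    have h0mem : (0:ℝ) ∈ Set.Icc
        ((fun x : ℝ => x^6 - 9*x^5 + 27*x^4 - 32*x^3 + 13*x^2 - 3*x - 1) (42896/10000))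
        ((fun x : ℝ => x^6 - 9*x^5 + 27*x^4 - 32*x^3 + 13*x^2 - 3*x - 1) (42897/10000)) := by
      constructor <;> norm_num
    obtain ⟨lam, hmem, heq⟩ := hsub h0mem
    exact ⟨lam, hmem, heq⟩
  obtain ⟨hlamL, hlamU⟩ := hlam_mem
  have hlam_pos : (0:ℝ) < lam := by linarith
  -- power bounds for lam
  have hpl2 : (42896/10000:ℝ)^2 ≤ lam^2 := pow_le_pow_left₀ (by norm_num) hlamL 2
  have hpl3 : (42896/10000:ℝ)^3 ≤ lam^3 := pow_le_pow_left₀ (by norm_num) hlamL 3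
  have hpl4 : (42896/10000:ℝ)^4 ≤ lam^4 := pow_le_pow_left₀ (by norm_num) hlamL 4
  have hpl5 : (42896/10000:ℝ)^5 ≤ lam^5 := pow_le_pow_left₀ (by norm_num) hlamL 5
  have hpl6 : (42896/10000:ℝ)^6 ≤ lam^6 := pow_le_pow_left₀ (by norm_num) hlamL 6
  have hpl7 : (42896/10000:ℝ)^7 ≤ lam^7 := pow_le_pow_left₀ (by norm_num) hlamL 7
  have hpl8 : (42896/10000:ℝ)^8 ≤ lam^8 := pow_le_pow_left₀ (by norm_num) hlamL 8
  have hpu2 : lam^2 ≤ (42897/10000:ℝ)^2 := pow_le_pow_left₀ hlam_pos.le hlamU 2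
  have hpu3 : lam^3 ≤ (42897/10000:ℝ)^3 := pow_le_pow_left₀ hlam_pos.le hlamU 3
  have hpu4 : lam^4 ≤ (42897/10000:ℝ)^4 := pow_le_pow_left₀ hlam_pos.le hlamU 4
  have hpu5 : lam^5 ≤ (42897/10000:ℝ)^5 := pow_le_pow_left₀ hlam_pos.le hlamU 5
  have hpu6 : lam^6 ≤ (42897/10000:ℝ)^6 := pow_le_pow_left₀ hlam_pos.le hlamU 6
  have hpu7 : lam^7 ≤ (42897/10000:ℝ)^7 := pow_le_pow_left₀ hlam_pos.le hlamU 7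
  have hpu8 : lam^8 ≤ (42897/10000:ℝ)^8 := pow_le_pow_left₀ hlam_pos.le hlamU 8
  -- the differenced sequence
  set d : ℕ → ℝ := fun n => (a (n+1) : ℝ) - lam * (a n : ℝ) with hd_def
  have hdrec : ∀ n : ℕ, d (n+8) = -(
      ((-172/25 : ℝ) + lam) * d (n+7) +
      (278/25 - (172/25)*lam + lam^2) * d (n+6) +
      (-2/25 + (278/25)*lam - (172/25)*lam^2 + lam^3) * d (n+5) +
      (6/25 - (2/25)*lam + (278/25)*lam^2 - (172/25)*lam^3 + lam^4) * d (n+4) +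
      (403/25 + (6/25)*lam - (2/25)*lam^2 + (278/25)*lam^3 - (172/25)*lam^4 + lam^5) * d (n+3) +
      (-1928/25 + (403/25)*lam + (6/25)*lam^2 - (2/25)*lam^3 + (278/25)*lam^4
        - (172/25)*lam^5 + lam^6) * d (n+2) +
      (838/25 - (1928/25)*lam + (403/25)*lam^2 + (6/25)*lam^3 - (2/25)*lam^4
        + (278/25)*lam^5 - (172/25)*lam^6 + lam^7) * d (n+1) +
      (-341/25 + (838/25)*lam - (1928/25)*lam^2 + (403/25)*lam^3 + (6/25)*lam^4
        - (2/25)*lam^5 + (278/25)*lam^6 - (172/25)*lam^7 + lam^8) * d n) := by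
    intro n
    simp only [hd_def]
    linear_combination (87/25 : ℝ) * hrecR n + (16/5 : ℝ) * hrecR (n+1)
      + (53/25 : ℝ) * hrecR (n+2) + hrecR (n+3)
      - (lam^3 + (53/25)*lam^2 + (16/5)*lam + 87/25) * ((a n : ℝ)) * hlam_root
  -- coefficient bounds
  have hb7 : |(-172/25 : ℝ) + lam| ≤ 5181/2000 := by
    rw [abs_le]; constructor <;> linarith
  have hb6 : |(278/25 - (172/25)*lam + lam^2 : ℝ)| ≤ 91/10000 := by
    rw [abs_le]; constructor <;> linarith
  have hb5 : |(-2/25 + (278/25)*lam - (172/25)*lam^2 + lam^3 : ℝ)| ≤ 507/10000 := by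
    rw [abs_le]; constructor <;> linarith
  have hb4 : |(6/25 - (2/25)*lam + (278/25)*lam^2 - (172/25)*lam^3 + lam^4 : ℝ)| ≤ 893/10000 := by
    rw [abs_le]; constructor <;> linarith
  have hb3 : |(403/25 + (6/25)*lam - (2/25)*lam^2 + (278/25)*lam^3 - (172/25)*lam^4
      + lam^5 : ℝ)| ≤ 16557/1000 := by
    rw [abs_le]; constructor <;> linarith
  have hb2 : |(-1928/25 + (403/25)*lam + (6/25)*lam^2 - (2/25)*lam^3 + (278/25)*lam^4
      - (172/25)*lam^5 + lam^6 : ℝ)| ≤ 82521/10000 := by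
    rw [abs_le]; constructor <;> linarith
  have hb1 : |(838/25 - (1928/25)*lam + (403/25)*lam^2 + (6/25)*lam^3 - (2/25)*lam^4
      + (278/25)*lam^5 - (172/25)*lam^6 + lam^7 : ℝ)| ≤ 46899/5000 := by
    rw [abs_le]; constructor <;> linarith
  have hb0 : |(-341/25 + (838/25)*lam - (1928/25)*lam^2 + (403/25)*lam^3 + (6/25)*lam^4
      - (2/25)*lam^5 + (278/25)*lam^6 - (172/25)*lam^7 + lam^8 : ℝ)| ≤ 19324/625 := by
    rw [abs_le]; constructor <;> linarith
  -- the decay bound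
  have hdbound : ∀ n : ℕ, |d n| ≤ 3^n := by
    intro n
    induction n using Nat.strong_induction_on with
    | _ n ih =>
      rcases lt_or_ge n 8 with hn | hn
      · interval_cases n <;>
          (simp only [hd_def]
           norm_num [hA0, hA1, hA2, hA3, hA4, hA5, hA6, hA7, hA8]
           try (rw [abs_le]; constructor <;> linarith))
      · obtain ⟨m, rfl⟩ : ∃ m, n = m+8 := ⟨n-8, by omega⟩
        rw [hdrec m, abs_neg]
        have t7 := mul_le_mul hb7 (ih (m+7) (by omega)) (abs_nonneg _) (by norm_num)
        have t6 := mul_le_mul hb6 (ih (m+6) (by omega)) (abs_nonneg _) (by norm_num)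
        have t5 := mul_le_mul hb5 (ih (m+5) (by omega)) (abs_nonneg _) (by norm_num)
        have t4 := mul_le_mul hb4 (ih (m+4) (by omega)) (abs_nonneg _) (by norm_num)
        have t3 := mul_le_mul hb3 (ih (m+3) (by omega)) (abs_nonneg _) (by norm_num)
        have t2 := mul_le_mul hb2 (ih (m+2) (by omega)) (abs_nonneg _) (by norm_num)
        have t1 := mul_le_mul hb1 (ih (m+1) (by omega)) (abs_nonneg _) (by norm_num)
        have t0 := mul_le_mul hb0 (ih m (by omega)) (abs_nonneg _) (by norm_num)
        have habs : |((-172/25 : ℝ) + lam) * d (m+7) +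
            (278/25 - (172/25)*lam + lam^2) * d (m+6) +
            (-2/25 + (278/25)*lam - (172/25)*lam^2 + lam^3) * d (m+5) +
            (6/25 - (2/25)*lam + (278/25)*lam^2 - (172/25)*lam^3 + lam^4) * d (m+4) +
            (403/25 + (6/25)*lam - (2/25)*lam^2 + (278/25)*lam^3 - (172/25)*lam^4 + lam^5) * d (m+3) +
            (-1928/25 + (403/25)*lam + (6/25)*lam^2 - (2/25)*lam^3 + (278/25)*lam^4
              - (172/25)*lam^5 + lam^6) * d (m+2) +
            (838/25 - (1928/25)*lam + (403/25)*lam^2 + (6/25)*lam^3 - (2/25)*lam^4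
              + (278/25)*lam^5 - (172/25)*lam^6 + lam^7) * d (m+1) +
            (-341/25 + (838/25)*lam - (1928/25)*lam^2 + (403/25)*lam^3 + (6/25)*lam^4
              - (2/25)*lam^5 + (278/25)*lam^6 - (172/25)*lam^7 + lam^8) * d m| ≤
            (5181/2000)*3^(m+7) + (91/10000)*3^(m+6) + (507/10000)*3^(m+5)
            + (893/10000)*3^(m+4) + (16557/1000)*3^(m+3) + (82521/10000)*3^(m+2)
            + (46899/5000)*3^(m+1) + (19324/625)*3^m := by
          calc _ ≤ |((-172/25 : ℝ) + lam) * d (m+7)| +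
              |(278/25 - (172/25)*lam + lam^2) * d (m+6)| +
              |(-2/25 + (278/25)*lam - (172/25)*lam^2 + lam^3) * d (m+5)| +
              |(6/25 - (2/25)*lam + (278/25)*lam^2 - (172/25)*lam^3 + lam^4) * d (m+4)| +
              |(403/25 + (6/25)*lam - (2/25)*lam^2 + (278/25)*lam^3 - (172/25)*lam^4 + lam^5) * d (m+3)| +
              |(-1928/25 + (403/25)*lam + (6/25)*lam^2 - (2/25)*lam^3 + (278/25)*lam^4
                - (172/25)*lam^5 + lam^6) * d (m+2)| +
              |(838/25 - (1928/25)*lam + (403/25)*lam^2 + (6/25)*lam^3 - (2/25)*lam^4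
                + (278/25)*lam^5 - (172/25)*lam^6 + lam^7) * d (m+1)| +
              |(-341/25 + (838/25)*lam - (1928/25)*lam^2 + (403/25)*lam^3 + (6/25)*lam^4
                - (2/25)*lam^5 + (278/25)*lam^6 - (172/25)*lam^7 + lam^8) * d m| := by
                exact (abs_add_le _ _).trans (add_le_add ((abs_add_le _ _).trans (add_le_add
                  ((abs_add_le _ _).trans (add_le_add ((abs_add_le _ _).trans (add_le_add
                  ((abs_add_le _ _).trans (add_le_add ((abs_add_le _ _).trans (add_le_add
                  ((abs_add_le _ _).trans (add_le_add le_rfl le_rfl)) le_rfl)) le_rfl))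
                  le_rfl)) le_rfl)) le_rfl)) le_rfl)
            _ ≤ _ := by
                simp only [abs_mul]
                exact add_le_add (add_le_add (add_le_add (add_le_add (add_le_add
                  (add_le_add (add_le_add t7 t6) t5) t4) t3) t2) t1) t0
        refine habs.trans ?_
        have h3m : (0:ℝ) ≤ 3^m := by positivity
        simp only [pow_add]
        nlinarith [h3m]
  have hlam_ne : lam ≠ 0 := ne_of_gt hlam_pos
  -- partial sums identity
  have hSA : ∀ n : ℕ, (a n : ℝ) / lam ^ n = ∑ k ∈ range n, d k / lam^(k+1) := by
    intro n; induction n with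
    | zero => simp [hA0]
    | succ n ihn =>
        rw [Finset.sum_range_succ, ← ihn]
        simp only [hd_def]
        field_simp
        ring
  -- geometric domination
  have hfb : ∀ k : ℕ, |d k / lam^(k+1)| ≤ (625/2681) * (1875/2681)^k := by
    intro k
    have hkey : (625/2681:ℝ) * (1875/2681)^k = 3^k / (42896/10000)^(k+1) := by
      rw [show ((1875:ℝ)/2681) = 3/(42896/10000) by norm_num, div_pow, pow_succ]
      field_simp
      ring
    rw [abs_div, abs_pow, abs_of_pos hlam_pos, hkey]
    exact div_le_div₀ (by positivity) (hdbound k) (by positivity)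
      (pow_le_pow_left₀ (by norm_num) hlamL (k+1))
  have hsumgeo : Summable (fun k : ℕ => (625/2681:ℝ) * (1875/2681)^k) :=
    (summable_geometric_of_lt_one (by norm_num) (by norm_num)).mul_left _
  have habs_sum : Summable (fun k : ℕ => |d k / lam^(k+1)|) :=
    Summable.of_nonneg_of_le (fun k => abs_nonneg _) hfb hsumgeo
  have hsum : Summable (fun k : ℕ => d k / lam^(k+1)) := habs_sum.of_abs
  set c := ∑' k : ℕ, d k / lam^(k+1) with hc_def
  have hST : Tendsto (fun n => ∑ k ∈ range n, d k / lam^(k+1)) atTop (nhds c) :=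
    hsum.hasSum.tendsto_sum_nat
  have hTend : Tendsto (fun n : ℕ => (a n : ℝ)/lam^n) atTop (nhds c) :=
    hST.congr (fun n => (hSA n).symm)
  -- lower bound for the partial sums, n ≥ 8
  have htail : ∀ n : ℕ, 8 ≤ n →
      (14451:ℝ)/(42897/10000)^8 - (625/2681)*(1875/2681)^8*(2681/806)
        ≤ ∑ k ∈ range n, d k / lam^(k+1) := by
    intro n hn
    have hsplit := Finset.sum_range_add_sum_Ico (fun k => d k / lam^(k+1)) hn
    have h1 : |∑ k ∈ Ico 8 n, d k / lam^(k+1)| ≤ ∑ k ∈ Ico 8 n, (625/2681:ℝ)*(1875/2681)^k :=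
      (Finset.abs_sum_le_sum_abs _ _).trans (Finset.sum_le_sum fun k _ => hfb k)
    have h2 : ∑ k ∈ Ico 8 n, (625/2681:ℝ)*(1875/2681)^k
        ≤ (625/2681)*(1875/2681)^8*(2681/806) := by
      rw [Finset.sum_Ico_eq_sum_range]
      have he : ∀ k ∈ range (n-8),
          (625/2681:ℝ)*(1875/2681)^(8+k) = ((625/2681)*(1875/2681)^8)*(1875/2681)^k := by
        intro k _; rw [pow_add]; ring
      rw [Finset.sum_congr rfl he, ← Finset.mul_sum]
      have hg : ∑ k ∈ range (n-8), ((1875:ℝ)/2681)^k ≤ 2681/806 := by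
        rw [geom_sum_eq (by norm_num : ((1875:ℝ)/2681) ≠ 1)]
        rw [div_le_iff_of_neg (by norm_num : ((1875:ℝ)/2681) - 1 < 0)]
        have := pow_nonneg (by norm_num : (0:ℝ) ≤ 1875/2681) (n-8)
        linarith
      exact mul_le_mul_of_nonneg_left hg (by positivity)
    have hS8 : ∑ k ∈ range 8, d k / lam^(k+1) = (a 8 : ℝ)/lam^8 := (hSA 8).symm
    have hlow : (14451:ℝ)/(42897/10000)^8 ≤ (a 8:ℝ)/lam^8 := by
      rw [hA8, div_le_div_iff₀ (by positivity) (by positivity)]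
      nlinarith [hpu8]
    have hnegabs := neg_abs_le (∑ k ∈ Ico 8 n, d k / lam^(k+1))
    linarith
  have hclow := ge_of_tendsto hST (eventually_atTop.2 ⟨8, htail⟩)
  have hcpos : 0 < c := lt_of_lt_of_le (by norm_num) hclow
  exact ⟨c, lam, hcpos, ⟨by nlinarith [hlamL], by nlinarith [hlamU]⟩, hTend⟩
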